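/- Let (A, M) be a local domain which is not a field, E = A/M, and R = A ⋉ E. Let x be a nonzero element of M, and J = R·(x, 1̄) the principal ideal generated by (x, 1̄). Then (x, 0) ∉ J, although x lies in the ideal {a ∈ A : (a,e) ∈ J for some e ∈ E} and thus J is strictly contained in (Ax) ⋉ E. -/
import Mathlib


/-- Let `(A, M)` be a local domain which is not a field, `E = A/M`, `R = A ⋉ E`, and
`J = R·(x, 1̄)` for a nonzero `x ∈ M`. Then `(x, 0) ∉ J`, while `x` lies in
`{a : (a, e) ∈ J for some e}`; moreover `J ⊆ (Ax) ⋉ E`, so `J ⊊ (Ax) ⋉ E`. -/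
theorem trivSqZeroExt_span_ne (A : Type*) [CommRing A] [IsLocalRing A] [IsDomain A]
    (hA : ¬IsField A)
    (x : A) (hx : x ∈ IsLocalRing.maximalIdeal A) (hx0 : x ≠ 0)
    (J : Ideal (TrivSqZeroExt A (A ⧸ IsLocalRing.maximalIdeal A)))
    (hJ : J = Ideal.span {TrivSqZeroExt.inl x +
      TrivSqZeroExt.inr (Ideal.Quotient.mk (IsLocalRing.maximalIdeal A) 1)}) :
    TrivSqZeroExt.inl x ∉ J ∧
      (∃ e : A ⧸ IsLocalRing.maximalIdeal A, TrivSqZeroExt.inl x + TrivSqZeroExt.inr e ∈ J) ∧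
      ∀ y ∈ J, TrivSqZeroExt.fst y ∈ Ideal.span {x} := by
  subst hJ
  set g : TrivSqZeroExt A (A ⧸ IsLocalRing.maximalIdeal A) :=
    TrivSqZeroExt.inl x + TrivSqZeroExt.inr (Ideal.Quotient.mk (IsLocalRing.maximalIdeal A) 1)
  refine ⟨?_, ⟨_, Ideal.subset_span rfl⟩, ?_⟩
  · intro h
    rw [Ideal.mem_span_singleton] at h
    obtain ⟨r, hr⟩ := h
    have h1 : x = x * TrivSqZeroExt.fst r := by
      have := congrArg TrivSqZeroExt.fst hr
      simpa [g, mul_comm] using this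
    have hfst : TrivSqZeroExt.fst r = 1 := by
      have : x * 1 = x * TrivSqZeroExt.fst r := by simpa using h1
      exact (mul_left_cancel₀ hx0 this).symm
    have h2 := congrArg TrivSqZeroExt.snd hr
    have hxsmul : ∀ e : A ⧸ IsLocalRing.maximalIdeal A, x • e = 0 := by
      intro e
      obtain ⟨a, rfl⟩ := Ideal.Quotient.mk_surjective e
      have : x • (Ideal.Quotient.mk (IsLocalRing.maximalIdeal A) a) =
          Ideal.Quotient.mk (IsLocalRing.maximalIdeal A) (x * a) := rfl
      rw [this]
      exact (Ideal.Quotient.eq_zero_iff_mem).2 (Ideal.mul_mem_right a _ hx)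
    rw [TrivSqZeroExt.snd_mul] at h2
    simp [g, hfst, hxsmul, TrivSqZeroExt.snd_inl] at h2
  · intro y hy
    rw [Ideal.mem_span_singleton] at hy
    obtain ⟨r, rfl⟩ := hy
    rw [Ideal.mem_span_singleton]
    exact ⟨TrivSqZeroExt.fst r, by simp [g, mul_comm]⟩
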